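/- Let F be a field of characteristic 0 and let h, x ∈ F[[t]] be formal power series with zero constant term such that h ∘ h = t, and suppose x ∘ h = -x and h' · (x' ∘ h) = x'. Then x' = 0. Consequently, no element of the derivative subgroup {(x'(t), x(t))} of the Riordan group conjugates the involution (h'(t), h(t)) to (1, -t). -/

import Mathlib

open PowerSeries

/-- Composition `f ∘ g` of formal power series, valid when `g` has zero constant term. -/
noncomputable def PowerSeries.comp {F : Type*} [Field F] (f g : PowerSeries F) :
    PowerSeries F :=
  PowerSeries.mk fun n => ∑ k ∈ Finset.range (n + 1),
    PowerSeries.coeff k f * PowerSeries.coeff n (g ^ k)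

lemma coeff_derivativeFun' {F : Type*} [Field F] (f : PowerSeries F) (n : ℕ) :
    PowerSeries.coeff n f.derivativeFun = PowerSeries.coeff (n + 1) f * (n + 1) :=
  PowerSeries.coeff_derivative f n

lemma coeff_pow_eq_zero {F : Type*} [Field F] {g : PowerSeries F}
    (hg : PowerSeries.constantCoeff g = 0) {j k : ℕ} (hjk : j < k) :
    PowerSeries.coeff j (g ^ k) = 0 := by
  have hX : (X : PowerSeries F) ^ k ∣ g ^ k :=
    pow_dvd_pow_of_dvd (PowerSeries.X_dvd_iff.mpr hg) k
  exact (PowerSeries.X_pow_dvd_iff.mp hX) j hjk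

lemma derivativeFun_pow {F : Type*} [Field F] (g : PowerSeries F) (k : ℕ) :
    (g ^ (k + 1)).derivativeFun = (k + 1 : F⟦X⟧) * (g ^ k * g.derivativeFun) := by
  induction k with
  | zero => simp
  | succ k ih =>
    rw [pow_succ, PowerSeries.derivativeFun_mul, ih]
    push_cast
    ring_nf

lemma comp_derivativeFun {F : Type*} [Field F] (f g : PowerSeries F)
    (hg : PowerSeries.constantCoeff g = 0) :
    (PowerSeries.comp f g).derivativeFun
      = g.derivativeFun * PowerSeries.comp f.derivativeFun g := by
  ext n
  rw [coeff_derivativeFun']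
  rw [show PowerSeries.comp f g = PowerSeries.mk fun m => ∑ k ∈ Finset.range (m + 1),
    PowerSeries.coeff k f * PowerSeries.coeff m (g ^ k) from rfl, PowerSeries.coeff_mk]
  rw [PowerSeries.coeff_mul]
  -- rewrite RHS inner comp coefficients
  have hrhs : ∀ p ∈ Finset.HasAntidiagonal.antidiagonal n,
      PowerSeries.coeff p.1 g.derivativeFun *
        PowerSeries.coeff p.2 (PowerSeries.comp f.derivativeFun g)
      = ∑ k ∈ Finset.range (n + 1), PowerSeries.coeff p.1 g.derivativeFun *
          (PowerSeries.coeff k f.derivativeFun * PowerSeries.coeff p.2 (g ^ k)) := by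
    intro p hp
    rw [show PowerSeries.comp f.derivativeFun g = PowerSeries.mk fun m =>
      ∑ k ∈ Finset.range (m + 1), PowerSeries.coeff k f.derivativeFun *
        PowerSeries.coeff m (g ^ k) from rfl, PowerSeries.coeff_mk, Finset.mul_sum]
    have hp2 : p.2 ≤ n := Finset.HasAntidiagonal.antidiagonal.snd_le hp
    rw [Finset.sum_subset (Finset.range_subset_range.mpr (by omega : p.2 + 1 ≤ n + 1))]
    intro k hk hk2
    simp only [Finset.mem_range, not_lt] at hk2
    rw [coeff_pow_eq_zero hg (by omega : p.2 < k), mul_zero, mul_zero]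
  rw [Finset.sum_congr rfl hrhs, Finset.sum_comm]
  -- now RHS = Σ_{k ∈ range (n+1)} coeff k f' * coeff n (g' * g^k)
  have hrhs2 : ∀ k ∈ Finset.range (n + 1),
      (∑ p ∈ Finset.HasAntidiagonal.antidiagonal n, PowerSeries.coeff p.1 g.derivativeFun *
        (PowerSeries.coeff k f.derivativeFun * PowerSeries.coeff p.2 (g ^ k)))
      = PowerSeries.coeff k f.derivativeFun *
          PowerSeries.coeff n (g.derivativeFun * g ^ k) := by
    intro k _
    rw [PowerSeries.coeff_mul, Finset.mul_sum]
    exact Finset.sum_congr rfl fun p _ => by ring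
  rw [Finset.sum_congr rfl hrhs2]
  -- LHS: distribute (n+1)
  rw [Finset.sum_mul]
  -- drop the k = 0 term and reindex
  rw [Finset.sum_range_succ' (fun k => PowerSeries.coeff k f *
    PowerSeries.coeff (n + 1) (g ^ k) * ((n : F) + 1))]
  simp only [pow_zero, PowerSeries.coeff_one, Nat.succ_ne_zero, if_false, mul_zero,
    zero_mul, add_zero]
  refine Finset.sum_congr rfl fun k _ => ?_
  have h1 : PowerSeries.coeff (n + 1) (g ^ (k + 1)) * ((n : F) + 1)
      = PowerSeries.coeff n ((g ^ (k + 1)).derivativeFun) := by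
    simp [coeff_derivativeFun']
  calc PowerSeries.coeff (k + 1) f * PowerSeries.coeff (n + 1) (g ^ (k + 1)) * ((n : F) + 1)
      = PowerSeries.coeff (k + 1) f * PowerSeries.coeff n ((g ^ (k + 1)).derivativeFun) := by
        rw [mul_assoc, h1]
    _ = PowerSeries.coeff k f.derivativeFun *
          PowerSeries.coeff n (g.derivativeFun * g ^ k) := by
        rw [derivativeFun_pow, coeff_derivativeFun']
        rw [show ((k : F⟦X⟧) + 1) * (g ^ k * g.derivativeFun)
          = PowerSeries.C ((k : F) + 1) * (g.derivativeFun * g ^ k) by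
            push_cast
            rw [map_add, map_one, map_natCast]
            ring]
        rw [PowerSeries.coeff_C_mul]
        ring

/-- If `h ∘ h = t`, `x ∘ h = -x` and `h' · (x' ∘ h) = x'`, then `x' = 0`.
Hence no element of the derivative subgroup of the Riordan group conjugates
the involution `(h', h)` to `(1, -t)`. -/
theorem derivative_subgroup_no_conjugator
    {F : Type*} [Field F] [CharZero F] (h x : PowerSeries F)
    (hh0 : PowerSeries.constantCoeff h = 0)
    (hx0 : PowerSeries.constantCoeff x = 0)
    (hinv : PowerSeries.comp h h = X)
    (hodd : PowerSeries.comp x h = -x)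
    (hchain : h.derivativeFun * PowerSeries.comp x.derivativeFun h = x.derivativeFun) :
    x.derivativeFun = 0 := by
  have h1 : (PowerSeries.comp x h).derivativeFun = (-x).derivativeFun := by rw [hodd]
  rw [comp_derivativeFun x h hh0, hchain] at h1
  have h2 : (-x).derivativeFun = -x.derivativeFun := by
    ext n
    simp [coeff_derivativeFun']
  rw [h2] at h1
  ext n
  have h3 := congrArg (PowerSeries.coeff n) h1
  simp only [map_neg] at h3
  have h4 : PowerSeries.coeff n x.derivativeFun = 0 := by linear_combination h3 / 2
  simpa using h4
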